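/- Let K be a compact Hausdorff space with odeg(K) ≤ n. Then there exists a countable family F of open sets such that for every pairwise disjoint compact subsets L_0, ..., L_n of K there exist V_0, ..., V_n in F with L_i ⊆ V_i for each i and V_0 ∩ ... ∩ V_n = ∅. -/

import Mathlib

open Filter Topology

/-- `OdegLE K n` says the open degree of `K` is at most `n`. -/
def OdegLE (K : Type*) [TopologicalSpace K] (n : ℕ) : Prop :=
  ∃ F : Set (Set K), F.Countable ∧ (∀ V ∈ F, IsOpen V) ∧
    ∀ x : Fin (n + 1) → K, Function.Injective x →
      ∃ V : Fin (n + 1) → Set K, (∀ i, V i ∈ F ∧ x i ∈ V i) ∧ (⋂ i, V i) = ∅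

set_option linter.unusedSectionVars false

open Set

section Aux

variable {K : Type*} [TopologicalSpace K]

/-- The lattice generated by the range of `f`: finite unions of finite intersections. -/
def latt (f : ℕ → Set K) : Set (Set K) :=
  Set.range fun T : Finset (Finset ℕ) => ⋃ s ∈ T, ⋂ i ∈ s, f i

theorem latt_mem_iff {f : ℕ → Set K} {V : Set K} :
    V ∈ latt f ↔ ∃ T : Finset (Finset ℕ), V = ⋃ s ∈ T, ⋂ i ∈ s, f i := by
  constructor
  · rintro ⟨T, rfl⟩; exact ⟨T, rfl⟩
  · rintro ⟨T, rfl⟩; exact ⟨T, rfl⟩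

theorem latt_countable (f : ℕ → Set K) : (latt f).Countable := Set.countable_range _

theorem latt_isOpen {f : ℕ → Set K} (hf : ∀ i, IsOpen (f i)) :
    ∀ V ∈ latt f, IsOpen V := by
  intro V hV
  obtain ⟨T, rfl⟩ := latt_mem_iff.mp hV
  exact isOpen_biUnion fun s _ => isOpen_biInter_finset fun i _ => hf i

theorem latt_base {f : ℕ → Set K} (m : ℕ) : f m ∈ latt f :=
  latt_mem_iff.mpr ⟨{{m}}, by simp⟩

theorem latt_univ {f : ℕ → Set K} : (Set.univ : Set K) ∈ latt f :=
  latt_mem_iff.mpr ⟨{∅}, by simp⟩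

theorem latt_empty {f : ℕ → Set K} : (∅ : Set K) ∈ latt f :=
  latt_mem_iff.mpr ⟨∅, by simp⟩

theorem latt_union {f : ℕ → Set K} {A B : Set K} (hA : A ∈ latt f) (hB : B ∈ latt f) :
    A ∪ B ∈ latt f := by
  obtain ⟨T₁, rfl⟩ := latt_mem_iff.mp hA
  obtain ⟨T₂, rfl⟩ := latt_mem_iff.mp hB
  exact latt_mem_iff.mpr ⟨T₁ ∪ T₂, by rw [Finset.set_biUnion_union]⟩

theorem latt_inter {f : ℕ → Set K} {A B : Set K} (hA : A ∈ latt f) (hB : B ∈ latt f) :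
    A ∩ B ∈ latt f := by
  classical
  obtain ⟨T₁, rfl⟩ := latt_mem_iff.mp hA
  obtain ⟨T₂, rfl⟩ := latt_mem_iff.mp hB
  refine latt_mem_iff.mpr ⟨(T₁ ×ˢ T₂).image fun p => p.1 ∪ p.2, ?_⟩
  ext z
  simp only [mem_inter_iff, mem_iUnion, mem_iInter, Finset.mem_image, Finset.mem_product,
    Finset.mem_union, Prod.exists, exists_exists_and_eq_and]
  constructor
  · rintro ⟨⟨s₁, hs₁, h₁⟩, ⟨s₂, hs₂, h₂⟩⟩
    refine ⟨s₁ ∪ s₂, ⟨s₁, s₂, ⟨hs₁, hs₂⟩, rfl⟩, ?_⟩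
    intro i hi
    rcases Finset.mem_union.mp hi with hi | hi
    · exact h₁ i hi
    · exact h₂ i hi
  · rintro ⟨s, ⟨s₁, s₂, ⟨hs₁, hs₂⟩, rfl⟩, hz⟩
    exact ⟨⟨s₁, hs₁, fun i hi => hz i (Finset.mem_union_left _ hi)⟩,
      ⟨s₂, hs₂, fun i hi => hz i (Finset.mem_union_right _ hi)⟩⟩

theorem latt_biUnion {f : ℕ → Set K} {α : Type*} (t : Finset α) (g : α → Set K)
    (hg : ∀ y ∈ t, g y ∈ latt f) : (⋃ y ∈ t, g y) ∈ latt f := by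
  classical
  induction t using Finset.induction with
  | empty => simpa using latt_empty
  | insert _ _ ha ih =>
    rw [Finset.set_biUnion_insert]
    exact latt_union (hg _ (Finset.mem_insert_self _ _))
      (ih fun y hy => hg y (Finset.mem_insert_of_mem hy))

theorem latt_biInter {f : ℕ → Set K} {α : Type*} (t : Finset α) (g : α → Set K)
    (hg : ∀ y ∈ t, g y ∈ latt f) : (⋂ y ∈ t, g y) ∈ latt f := by
  classical
  induction t using Finset.induction with
  | empty => simpa using latt_univ
  | insert _ _ ha ih =>
    rw [Finset.set_biInter_insert]
    exact latt_inter (hg _ (Finset.mem_insert_self _ _))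
      (ih fun y hy => hg y (Finset.mem_insert_of_mem hy))

end Aux

theorem odeg_separates_compacts' (K : Type*) [TopologicalSpace K] [CompactSpace K]
    [T2Space K] (n : ℕ)
    (h : ∃ F : Set (Set K), F.Countable ∧ (∀ V ∈ F, IsOpen V) ∧
    ∀ x : Fin (n + 1) → K, Function.Injective x →
      ∃ V : Fin (n + 1) → Set K, (∀ i, V i ∈ F ∧ x i ∈ V i) ∧ (⋂ i, V i) = ∅) :
    ∃ F : Set (Set K), F.Countable ∧ (∀ V ∈ F, IsOpen V) ∧
      ∀ L : Fin (n + 1) → Set K, (∀ i, IsCompact (L i)) → (∀ i, (L i).Nonempty) →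
        (Pairwise fun a b => Disjoint (L a) (L b)) →
        ∃ V : Fin (n + 1) → Set K, (∀ i, V i ∈ F ∧ L i ⊆ V i) ∧ (⋂ i, V i) = ∅ := by
  classical
  obtain ⟨F₀, hc, hop, hsep⟩ := h
  obtain ⟨f, hf⟩ := (hc.insert ∅).exists_eq_range ⟨∅, Set.mem_insert _ _⟩
  have hfopen : ∀ i, IsOpen (f i) := by
    intro i
    have : f i ∈ insert ∅ F₀ := hf ▸ Set.mem_range_self i
    rcases this with h' | h'
    · rw [h']; exact isOpen_empty
    · exact hop _ h'
  have hF₀ : ∀ V ∈ F₀, V ∈ latt f := by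
    intro V hV
    have : V ∈ Set.range f := hf ▸ Set.mem_insert_of_mem _ hV
    obtain ⟨m, rfl⟩ := this
    exact latt_base m
  refine ⟨latt f, latt_countable f, latt_isOpen hfopen, ?_⟩
  intro L hcomp hne hdisj
  have main : ∀ k : ℕ, k ≤ n + 1 → ∀ x : Fin (n + 1) → K,
      (∀ i : Fin (n + 1), k ≤ (i : ℕ) → x i ∈ L i) →
      ∃ V : Fin (n + 1) → Set K, (∀ i, V i ∈ latt f) ∧
        (∀ i : Fin (n + 1), (i : ℕ) < k → L i ⊆ V i) ∧
        (∀ i : Fin (n + 1), k ≤ (i : ℕ) → x i ∈ V i) ∧ (⋂ i, V i) = ∅ := by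
    intro k
    induction k with
    | zero =>
      intro _ x hx
      have hinj : Function.Injective x := by
        intro i j hij
        by_contra hne'
        exact (hdisj hne').le_bot ⟨hx i (Nat.zero_le _), hij ▸ hx j (Nat.zero_le _)⟩
      obtain ⟨V, hV1, hV2⟩ := hsep x hinj
      exact ⟨V, fun i => hF₀ _ (hV1 i).1, fun i hi => absurd hi (by omega),
        fun i _ => (hV1 i).2, hV2⟩
    | succ k ih =>
      intro hk x hx
      have hkn : k < n + 1 := by omega
      set κ : Fin (n + 1) := ⟨k, hkn⟩ with hκ
      have hκval : (κ : ℕ) = k := rfl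
      have hstep : ∀ y ∈ L κ, ∃ V : Fin (n + 1) → Set K, (∀ i, V i ∈ latt f) ∧
          (∀ i : Fin (n + 1), (i : ℕ) < k → L i ⊆ V i) ∧
          (∀ i : Fin (n + 1), k ≤ (i : ℕ) → Function.update x κ y i ∈ V i) ∧
          (⋂ i, V i) = ∅ := by
        intro y hy
        refine ih (by omega) (Function.update x κ y) ?_
        intro i hi
        rcases eq_or_ne i κ with rfl | hiκ
        · rw [Function.update_self]; exact hy
        · rw [Function.update_of_ne hiκ]
          refine hx i ?_
          have : (i : ℕ) ≠ k := fun hik => hiκ (Fin.ext (hik.trans hκval.symm))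
          omega
      choose! W hW1 hW2 hW3 hW4 using hstep
      have hcov : L κ ⊆ ⋃ y ∈ L κ, W y κ := by
        intro y hy
        have := hW3 y hy κ (le_of_eq hκval.symm)
        rw [Function.update_self] at this
        exact Set.mem_biUnion hy this
      obtain ⟨t, htL, htfin, htcov⟩ := (hcomp κ).elim_finite_subcover_image
        (fun y hy => latt_isOpen hfopen _ (hW1 y hy κ)) hcov
      set T := htfin.toFinset with hT
      have hTL : ∀ y ∈ T, y ∈ L κ := fun y hy => htL (htfin.mem_toFinset.mp hy)
      refine ⟨fun i => if i = κ then ⋃ y ∈ T, W y κ else ⋂ y ∈ T, W y i, ?_, ?_, ?_, ?_⟩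
      · intro i
        dsimp only
        by_cases hi : i = κ
        · rw [if_pos hi]
          exact latt_biUnion T _ fun y hy => hW1 y (hTL y hy) κ
        · rw [if_neg hi]
          exact latt_biInter T _ fun y hy => hW1 y (hTL y hy) i
      · intro i hi
        dsimp only
        by_cases hiκ : i = κ
        · rw [if_pos hiκ, hiκ]
          refine subset_trans htcov ?_
          apply Set.iUnion₂_subset
          intro y hy z hz
          exact Set.mem_biUnion (htfin.mem_toFinset.mpr hy) hz
        · rw [if_neg hiκ]
          have hik : (i : ℕ) < k := by
            have : (i : ℕ) ≠ k := fun hik => hiκ (Fin.ext (hik.trans hκval.symm))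
            omega
          exact Set.subset_iInter₂ fun y hy => hW2 y (hTL y hy) i hik
      · intro i hi
        dsimp only
        have hiκ : i ≠ κ := by
          intro h'
          rw [h'] at hi
          omega
        rw [if_neg hiκ]
        refine Set.mem_iInter₂.mpr fun y hy => ?_
        have := hW3 y (hTL y hy) i (by omega)
        rwa [Function.update_of_ne hiκ] at this
      · ext z
        simp only [Set.mem_iInter, Set.mem_empty_iff_false, iff_false]
        intro hz
        have hzκ := hz κ
        rw [if_pos rfl] at hzκ
        obtain ⟨y, hy, hzy⟩ := Set.mem_iUnion₂.mp hzκ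
        have hzall : z ∈ ⋂ i, W y i := by
          refine Set.mem_iInter.mpr fun i => ?_
          by_cases hi : i = κ
          · rw [hi]; exact hzy
          · have := hz i
            rw [if_neg hi] at this
            exact Set.mem_iInter₂.mp this y hy
        rw [hW4 y (hTL y hy)] at hzall
        exact hzall
  choose x0 hx0 using hne
  obtain ⟨V, h1, h2, h3, h4⟩ := main (n + 1) le_rfl x0 fun i _ => hx0 i
  exact ⟨V, fun i => ⟨h1 i, h2 i i.isLt⟩, h4⟩

/-- If `odeg(K) ≤ n` then there is a countable family of open sets separating in the same
way any `n+1` pairwise disjoint (nonempty) compact subsets of `K`. -/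
theorem odeg_separates_compacts (K : Type*) [TopologicalSpace K] [CompactSpace K]
    [T2Space K] (n : ℕ) (h : OdegLE K n) :
    ∃ F : Set (Set K), F.Countable ∧ (∀ V ∈ F, IsOpen V) ∧
      ∀ L : Fin (n + 1) → Set K, (∀ i, IsCompact (L i)) → (∀ i, (L i).Nonempty) →
        (Pairwise fun a b => Disjoint (L a) (L b)) →
        ∃ V : Fin (n + 1) → Set K, (∀ i, V i ∈ F ∧ L i ⊆ V i) ∧ (⋂ i, V i) = ∅ := by
  exact odeg_separates_compacts' K n h
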